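/- arXiv:2604.02311 — 3 statements merged into one kernel-verified Lean document; each statement's English description precedes it below -/
import Mathlib

section
/- Let p be a prime and x an integer with 1 ≤ x < p. Run the Extended Euclidean Algorithm on (p, x) and let k be its termination index (so r_{k-1} = 1, r_k = 0). Then the product of the shifted quotients exceeds p: Π_{i=1}^{k-1} (q_i + 1) > p. -/
/-- Remainder sequence of the Extended Euclidean Algorithm on `(p, x)`:
`r 0 = p`, `r 1 = x`, and `r (i+1) = r (i-1) - ⌊r (i-1) / r i⌋ * r i` for `i ≥ 1`. -/
def eeaR (p x : ℕ) : ℕ → ℕ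
  | 0 => p
  | 1 => x
  | (i + 2) => eeaR p x i - (eeaR p x i / eeaR p x (i + 1)) * eeaR p x (i + 1)

/-- Quotient sequence `q i = ⌊r (i-1) / r i⌋` of the Extended Euclidean Algorithm. -/
def eeaQ (p x i : ℕ) : ℕ := eeaR p x (i - 1) / eeaR p x i

/-- Cofactor sequence of the Extended Euclidean Algorithm:
`t 0 = 0`, `t 1 = 1`, and `t (i+1) = t (i-1) + q i * t i` for `i ≥ 1`. -/
def eeaT (p x : ℕ) : ℕ → ℕ
  | 0 => 0
  | 1 => 1
  | (i + 2) => eeaT p x i + eeaQ p x (i + 1) * eeaT p x (i + 1)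

lemma eeaR_mod (p x i : ℕ) : eeaR p x (i + 2) = eeaR p x i % eeaR p x (i + 1) := by
  show eeaR p x i - (eeaR p x i / eeaR p x (i + 1)) * eeaR p x (i + 1) = _
  have h1 := Nat.div_add_mod' (eeaR p x i) (eeaR p x (i + 1))
  omega

lemma eeaR_gcd (p x : ℕ) : ∀ i, Nat.gcd (eeaR p x (i + 1)) (eeaR p x i) = Nat.gcd x p
  | 0 => rfl
  | (i + 1) => by
      rw [eeaR_mod, ← Nat.gcd_rec]
      exact eeaR_gcd p x i

/-- For a prime `p` and `1 ≤ x < p`, with termination index `k`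
(`r_{k-1} = 1`, `r_k = 0`), the product of the shifted quotients exceeds `p`:
`Π_{i=1}^{k-1} (q_i + 1) > p`. -/
theorem stmt_2 (p x : ℕ) (hp : p.Prime) (hx : 1 ≤ x) (hxp : x < p)
    (k : ℕ) (hk : eeaR p x k = 0) (hkmin : ∀ m < k, eeaR p x m ≠ 0) :
    p < ∏ i ∈ Finset.Icc 1 (k - 1), (eeaQ p x i + 1) := by
  have e0 : eeaR p x 0 = p := rfl
  have e1 : eeaR p x 1 = x := rfl
  have hk2 : 2 ≤ k := by
    rcases k with _ | _ | k
    · rw [e0] at hk; omega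
    · rw [e1] at hk; omega
    · omega
  -- r_{k-1} = 1
  have hcop : Nat.gcd x p = 1 := by
    have hnd : ¬ p ∣ x := fun h => absurd (Nat.le_of_dvd (by omega) h) (by omega)
    have := (Nat.Prime.coprime_iff_not_dvd hp).2 hnd
    exact Nat.Coprime.gcd_eq_one (Nat.Coprime.symm this)
  have hrk1 : eeaR p x (k - 1) = 1 := by
    have h := eeaR_gcd p x (k - 1)
    rw [show k - 1 + 1 = k by omega, hk, Nat.gcd_zero_left] at h
    omega
  -- step inequality
  have hstep : ∀ j, j + 1 < k → eeaR p x j < (eeaQ p x (j + 1) + 1) * eeaR p x (j + 1) := by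
    intro j hj
    have hpos : 0 < eeaR p x (j + 1) := Nat.pos_of_ne_zero (hkmin _ hj)
    have hdm := Nat.div_add_mod' (eeaR p x j) (eeaR p x (j + 1))
    have hlt := Nat.mod_lt (eeaR p x j) hpos
    show _ < (eeaR p x j / eeaR p x (j + 1) + 1) * eeaR p x (j + 1)
    rw [add_mul, one_mul]
    omega
  -- main induction
  have main : ∀ j, 1 ≤ j → j ≤ k - 1 →
      p < (∏ i ∈ Finset.Icc 1 j, (eeaQ p x i + 1)) * eeaR p x j := by
    intro j
    induction j with
    | zero => intro h1 _; exact absurd h1 (by omega)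
    | succ n ih =>
        intro _ h2
        rcases Nat.eq_zero_or_pos n with rfl | hn
        · simpa [e0] using hstep 0 (by omega)
        · have ihv := ih hn (by omega)
          have hs := hstep n (by omega)
          have hppos : 0 < ∏ i ∈ Finset.Icc 1 n, (eeaQ p x i + 1) :=
            Finset.prod_pos (fun i _ => by omega)
          calc p < (∏ i ∈ Finset.Icc 1 n, (eeaQ p x i + 1)) * eeaR p x n := ihv
            _ < (∏ i ∈ Finset.Icc 1 n, (eeaQ p x i + 1)) *
                  ((eeaQ p x (n + 1) + 1) * eeaR p x (n + 1)) :=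
                mul_lt_mul_of_pos_left hs hppos
            _ = (∏ i ∈ Finset.Icc 1 (n + 1), (eeaQ p x i + 1)) * eeaR p x (n + 1) := by
                rw [Finset.prod_Icc_succ_top (by omega)]; ring
  have hmain := main (k - 1) (by omega) le_rfl
  rwa [hrk1, mul_one] at hmain
end

section
/- Let p be a prime with 2^(n-1) ≤ p < 2^n, and let x be an integer with 1 ≤ x < p. Run the Extended Euclidean Algorithm on (p, x) with termination index k. Then for every j with 1 ≤ j ≤ k−1: q_j·t_j ≤ t_{j+1} ≤ p, and consequently the bit lengths satisfy (⌊log₂ t_j⌋ + 1) + ⌊log₂ q_j⌋ ≤ n + 1. -/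
lemma eea_ident (p x : ℕ) :
    ∀ i, eeaR p x i * eeaT p x (i + 1) + eeaR p x (i + 1) * eeaT p x i = p := by
  intro i
  induction i with
  | zero => simp [eeaR, eeaT]
  | succ m ih =>
    have key : eeaR p x (m + 2) = eeaR p x m - (eeaR p x m / eeaR p x (m + 1)) * eeaR p x (m + 1) := rfl
    have keyT : eeaT p x (m + 2) = eeaT p x m + eeaQ p x (m + 1) * eeaT p x (m + 1) := rfl
    have hq : eeaQ p x (m + 1) = eeaR p x m / eeaR p x (m + 1) := rfl
    set a := eeaR p x m
    set b := eeaR p x (m + 1)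
    set u := eeaT p x m
    set v := eeaT p x (m + 1)
    have hle : a / b * b ≤ a := Nat.div_mul_le_self a b
    rw [key, keyT, hq]
    zify [hle] at *
    ring_nf
    ring_nf at ih
    linarith

lemma eea_mod (p x m : ℕ) (hb : 0 < eeaR p x (m + 1)) :
    eeaR p x (m + 2) < eeaR p x (m + 1) := by
  have : eeaR p x (m + 2) = eeaR p x m % eeaR p x (m + 1) := by
    show eeaR p x m - _ * _ = _
    rw [Nat.mod_def]
    ring_nf
  rw [this]
  exact Nat.mod_lt _ hb

/-- For a prime `p` with `2^(n-1) ≤ p < 2^n` and `1 ≤ x < p`, with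
termination index `k`: for every `1 ≤ j ≤ k−1`, `q_j·t_j ≤ t_{j+1} ≤ p`, and the bit
lengths satisfy `(⌊log₂ t_j⌋ + 1) + ⌊log₂ q_j⌋ ≤ n + 1`. -/
theorem stmt_11 (n p x : ℕ) (hp : p.Prime)
    (hplb : 2 ^ (n - 1) ≤ p) (hpub : p < 2 ^ n)
    (hx : 1 ≤ x) (hxp : x < p)
    (k : ℕ) (hk : eeaR p x k = 0) (hkmin : ∀ m < k, eeaR p x m ≠ 0) :
    ∀ j, 1 ≤ j → j ≤ k - 1 →
      eeaQ p x j * eeaT p x j ≤ eeaT p x (j + 1) ∧ eeaT p x (j + 1) ≤ p ∧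
        (Nat.log 2 (eeaT p x j) + 1) + Nat.log 2 (eeaQ p x j) ≤ n + 1 := by
  have hp2 : 2 ≤ p := hp.two_le
  have hk0 : k ≠ 0 := by
    intro h; subst h
    have h0 : eeaR p x 0 = p := rfl
    omega
  have hrpos : ∀ m < k, 0 < eeaR p x m := fun m hm => Nat.pos_of_ne_zero (hkmin m hm)
  -- quotients are positive in range
  have hqpos : ∀ j, 1 ≤ j → j ≤ k - 1 → 1 ≤ eeaQ p x j := by
    intro j h1 h2
    have hjk : j < k := by omega
    have hrj : 0 < eeaR p x j := hrpos j hjk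
    have hge : eeaR p x j ≤ eeaR p x (j - 1) := by
      rcases Nat.lt_or_ge j 2 with hj2 | hj2
      · have : j = 1 := by omega
        subst this
        show eeaR p x 1 ≤ eeaR p x 0
        show x ≤ p
        omega
      · obtain ⟨m, rfl⟩ : ∃ m, j = m + 2 := ⟨j - 2, by omega⟩
        have := eea_mod p x m (hrpos (m + 1) (by omega))
        simpa using this.le
    show 1 ≤ eeaR p x (j - 1) / eeaR p x j
    exact (Nat.one_le_div_iff hrj).2 hge
  -- t is positive in range
  have htpos : ∀ m, m + 1 ≤ k - 1 → 1 ≤ eeaT p x (m + 1) := by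
    intro m
    induction m with
    | zero => intro _; exact le_refl 1
    | succ i ih =>
      intro hle
      have ht : eeaT p x (i + 1 + 1) = eeaT p x i + eeaQ p x (i + 1) * eeaT p x (i + 1) := rfl
      have h1 : 1 ≤ eeaQ p x (i + 1) := hqpos (i + 1) (by omega) (by omega)
      have h2 : 1 ≤ eeaT p x (i + 1) := ih (by omega)
      have := Nat.mul_le_mul h1 h2
      omega
  intro j hj1 hjk
  obtain ⟨m, rfl⟩ : ∃ m, j = m + 1 := ⟨j - 1, by omega⟩
  have ht : eeaT p x (m + 1 + 1) = eeaT p x m + eeaQ p x (m + 1) * eeaT p x (m + 1) := rfl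
  refine ⟨by omega, ?_, ?_⟩
  · -- t_{j+1} ≤ p
    have hid := eea_ident p x (m + 1)
    have hr : 1 ≤ eeaR p x (m + 1) := hrpos (m + 1) (by omega)
    nlinarith [hid, Nat.zero_le (eeaR p x (m + 2) * eeaT p x (m + 1)),
      Nat.mul_le_mul_right (eeaT p x (m + 2)) hr]
  · -- bit length
    have hq1 : 1 ≤ eeaQ p x (m + 1) := hqpos (m + 1) hj1 hjk
    have ht1 : 1 ≤ eeaT p x (m + 1) := htpos m hjk
    have hqt : eeaQ p x (m + 1) * eeaT p x (m + 1) ≤ p := by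
      have hid := eea_ident p x (m + 1)
      have hr : 1 ≤ eeaR p x (m + 1) := hrpos (m + 1) (by omega)
      nlinarith [Nat.zero_le (eeaR p x (m + 2) * eeaT p x (m + 1)),
        Nat.mul_le_mul_right (eeaT p x (m + 2)) hr]
    have h1 : 2 ^ Nat.log 2 (eeaQ p x (m + 1)) ≤ eeaQ p x (m + 1) :=
      Nat.pow_log_le_self 2 (by omega)
    have h2 : 2 ^ Nat.log 2 (eeaT p x (m + 1)) ≤ eeaT p x (m + 1) :=
      Nat.pow_log_le_self 2 (by omega)
    have h3 : 2 ^ (Nat.log 2 (eeaQ p x (m + 1)) + Nat.log 2 (eeaT p x (m + 1))) < 2 ^ n := by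
      rw [pow_add]
      calc 2 ^ Nat.log 2 (eeaQ p x (m + 1)) * 2 ^ Nat.log 2 (eeaT p x (m + 1))
          ≤ eeaQ p x (m + 1) * eeaT p x (m + 1) := Nat.mul_le_mul h1 h2
        _ ≤ p := hqt
        _ < 2 ^ n := hpub
    have h4 : Nat.log 2 (eeaQ p x (m + 1)) + Nat.log 2 (eeaT p x (m + 1)) < n :=
      (Nat.pow_lt_pow_iff_right (by norm_num)).1 h3
    omega
end

section
/- Let p be a prime with 2^(n-1) ≤ p < 2^n, and let x be an integer with 1 ≤ x < p. Run the Extended Euclidean Algorithm on (p, x) with termination index k and set b_i = ⌊log₂ q_i⌋. Fix 1 ≤ j ≤ k−1 and 0 < u ≤ 4(b_j + 1), let T = 4·Σ_{i=1}^{j-1}(b_i + 1) + u and ℓ_t = ⌊log₂ t_j⌋ + 1. Then ℓ_t + 1 ≤ ⌈T/4⌉ + 1 and ℓ_t + 1 ≤ n + 1. -/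
lemma eea_inv (p x : ℕ) (i : ℕ) :
    eeaR p x i * eeaT p x (i + 1) + eeaR p x (i + 1) * eeaT p x i = p := by
  induction i with
  | zero => simp [eeaR, eeaT]
  | succ i ih =>
      have hq : (eeaR p x i / eeaR p x (i + 1)) * eeaR p x (i + 1) ≤ eeaR p x i :=
        Nat.div_mul_le_self _ _
      show eeaR p x (i+1) * eeaT p x (i + 2) + eeaR p x (i + 2) * eeaT p x (i+1) = p
      rw [show eeaR p x (i+2) = eeaR p x i - (eeaR p x i / eeaR p x (i + 1)) * eeaR p x (i + 1) from rfl,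
        show eeaT p x (i+2) = eeaT p x i + eeaQ p x (i + 1) * eeaT p x (i + 1) from rfl]
      unfold eeaQ
      simp only [Nat.add_sub_cancel]
      set q := eeaR p x i / eeaR p x (i + 1) with hqdef
      zify [hq]
      zify at ih
      linear_combination ih

lemma eeaR_lt (p x i : ℕ) (h : eeaR p x (i + 1) ≠ 0) :
    eeaR p x (i + 2) < eeaR p x (i + 1) := by
  rw [eeaR_mod]; exact Nat.mod_lt _ (Nat.pos_of_ne_zero h)

lemma eea_growth (p x k : ℕ) (hxp : x < p) (hkmin : ∀ m < k, eeaR p x m ≠ 0) :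
    ∀ i, i < k → eeaT p x i ≤ eeaT p x (i + 1) ∧
      eeaT p x (i + 1) ≤ ∏ l ∈ Finset.Icc 1 i, 2 ^ (Nat.log 2 (eeaQ p x l) + 1) := by
  intro i
  induction i with
  | zero => intro _; simp [eeaT]
  | succ i ih =>
      intro hik
      obtain ⟨h1, h2⟩ := ih (by omega)
      have hr1 : eeaR p x (i + 1) ≠ 0 := hkmin _ (by omega)
      have hle : eeaR p x (i + 1) ≤ eeaR p x i := by
        cases i with
        | zero => exact le_of_lt hxp
        | succ m => exact le_of_lt (eeaR_lt p x m (hkmin _ (by omega)))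
      have hq1 : 1 ≤ eeaQ p x (i + 1) := by
        unfold eeaQ
        simp only [Nat.add_sub_cancel]
        exact (Nat.one_le_div_iff (Nat.pos_of_ne_zero hr1)).mpr hle
      have hqb : eeaQ p x (i + 1) + 1 ≤ 2 ^ (Nat.log 2 (eeaQ p x (i + 1)) + 1) :=
        Nat.lt_pow_succ_log_self (by norm_num) _
      have hT2 : eeaT p x (i + 2) = eeaT p x i + eeaQ p x (i + 1) * eeaT p x (i + 1) := rfl
      constructor
      · calc eeaT p x (i + 1) = 1 * eeaT p x (i + 1) := (one_mul _).symm
          _ ≤ eeaQ p x (i + 1) * eeaT p x (i + 1) := Nat.mul_le_mul_right _ hq1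
          _ ≤ eeaT p x (i + 2) := by rw [hT2]; omega
      · rw [hT2, Finset.prod_Icc_succ_top (by omega : 1 ≤ i + 1)]
        calc eeaT p x i + eeaQ p x (i + 1) * eeaT p x (i + 1)
            ≤ (eeaQ p x (i + 1) + 1) * eeaT p x (i + 1) := by nlinarith
          _ ≤ 2 ^ (Nat.log 2 (eeaQ p x (i + 1)) + 1) * eeaT p x (i + 1) :=
              Nat.mul_le_mul_right _ hqb
          _ ≤ 2 ^ (Nat.log 2 (eeaQ p x (i + 1)) + 1) *
              ∏ l ∈ Finset.Icc 1 i, 2 ^ (Nat.log 2 (eeaQ p x l) + 1) :=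
              Nat.mul_le_mul_left _ h2
          _ = _ := by ring

/-- With `b_j = ⌊log₂ q_j⌋`, step `T = 4·Σ_{i<j}(b_i+1) + u`
(`0 < u ≤ 4(b_j+1)`) and `ℓ_t = ⌊log₂ t_j⌋ + 1`:
`ℓ_t + 1 ≤ ⌈T/4⌉ + 1` and `ℓ_t + 1 ≤ n + 1`. -/
theorem stmt_15 (n p x : ℕ) (hp : p.Prime)
    (hplb : 2 ^ (n - 1) ≤ p) (hpub : p < 2 ^ n)
    (hx : 1 ≤ x) (hxp : x < p)
    (k : ℕ) (hk : eeaR p x k = 0) (hkmin : ∀ m < k, eeaR p x m ≠ 0)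
    (j u : ℕ) (hj1 : 1 ≤ j) (hjk : j ≤ k - 1)
    (hu1 : 0 < u) (hu2 : u ≤ 4 * (Nat.log 2 (eeaQ p x j) + 1))
    (T : ℕ) (hT : T = 4 * ∑ i ∈ Finset.Icc 1 (j - 1), (Nat.log 2 (eeaQ p x i) + 1) + u)
    (ℓt : ℕ) (hlt : ℓt = Nat.log 2 (eeaT p x j) + 1) :
    ((ℓt : ℤ) + 1 ≤ ⌈(T : ℚ) / 4⌉ + 1) ∧ ℓt + 1 ≤ n + 1 := by
  have hkj : j + 1 ≤ k := by
    rcases Nat.eq_zero_or_pos k with h0 | h0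
    · exfalso; exact (by simp [h0] at hjk; omega)
    · omega
  set S := ∑ i ∈ Finset.Icc 1 (j - 1), (Nat.log 2 (eeaQ p x i) + 1) with hS
  -- bound t_j ≤ 2^S
  have hgrow := (eea_growth p x k hxp hkmin (j - 1) (by omega)).2
  rw [Nat.sub_add_cancel hj1] at hgrow
  have hpow : (∏ l ∈ Finset.Icc 1 (j - 1), 2 ^ (Nat.log 2 (eeaQ p x l) + 1)) = 2 ^ S := by
    rw [hS, Finset.prod_pow_eq_pow_sum]
  rw [hpow] at hgrow
  have hlog : Nat.log 2 (eeaT p x j) ≤ S := by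
    calc Nat.log 2 (eeaT p x j) ≤ Nat.log 2 (2 ^ S) := Nat.log_mono_right hgrow
      _ = S := Nat.log_pow (by norm_num : 1 < 2) S
  -- t_j ≤ p
  have hinv := eea_inv p x (j - 1)
  rw [Nat.sub_add_cancel hj1] at hinv
  have hrj : 1 ≤ eeaR p x (j - 1) := Nat.pos_of_ne_zero (hkmin _ (by omega))
  have htp : eeaT p x j ≤ p := by nlinarith
  have hn1 : 1 ≤ n := by
    have h2 : 2 ≤ p := hp.two_le
    rcases n with _ | n
    · simp at hpub; omega
    · omega
  constructor
  · have h1 : (S : ℤ) + 1 ≤ ⌈(T : ℚ) / 4⌉ := by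
      rw [Int.add_one_le_iff, Int.lt_ceil, lt_div_iff₀ (by norm_num : (0:ℚ) < 4)]
      have h4 : S * 4 < T := by omega
      exact_mod_cast h4
    have : (ℓt : ℤ) ≤ (S : ℤ) + 1 := by exact_mod_cast (by omega : ℓt ≤ S + 1)
    omega
  · rcases Nat.eq_zero_or_pos (eeaT p x j) with h0 | h0
    · simp [hlt, h0]; omega
    · have : Nat.log 2 (eeaT p x j) < n :=
        Nat.log_lt_of_lt_pow h0.ne' (by omega)
      omega
end
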